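/- Let R be a commutative ring and f, g, h ∈ R with D(h) = D(f) ∨ D(g) in the Zariski lattice (equivalently √(h) = √(f, g)). Then the square R[1/h] → R[1/f], R[1/h] → R[1/g], R[1/f] → R[1/fg], R[1/g] → R[1/fg] (with all arrows the unique R-algebra homomorphisms) is a pullback in commutative rings. -/

import Mathlib

universe u

open Localization IsLocalization CategoryTheory CategoryTheory.Limits

section Aux

variable {R : Type u} [CommRing R]

/-- One can write `1` as an `S`-combination of `f^a` and `g^b` in `S = R[1/h]`
when `h ∈ √(f, g)`. -/
lemma aux_one_eq_comb (f g h : R)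
    (hc : h ∈ (Ideal.span {f, g} : Ideal R).radical) (a b : ℕ) :
    ∃ p q : Localization.Away h,
      p * algebraMap R (Localization.Away h) f ^ a
        + q * algebraMap R (Localization.Away h) g ^ b = 1 := by
  have hfg : (Ideal.span {f, g} : Ideal R).radical ≤
      (Ideal.span {f ^ a, g ^ b} : Ideal R).radical := by
    rw [← Ideal.radical_idem (I := Ideal.span {f ^ a, g ^ b})]
    apply Ideal.radical_mono
    rw [Ideal.span_le]
    rintro x (rfl | rfl)
    · exact ⟨a, Ideal.subset_span (by simp)⟩
    · exact ⟨b, Ideal.subset_span (by simp)⟩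
  obtain ⟨e, he⟩ := hfg hc
  obtain ⟨u, v, huv⟩ := Ideal.mem_span_pair.mp he
  have hmem : (algebraMap R (Localization.Away h) h) ^ e ∈
      (Ideal.span {algebraMap R (Localization.Away h) f ^ a,
        algebraMap R (Localization.Away h) g ^ b} : Ideal (Localization.Away h)) := by
    refine Ideal.mem_span_pair.mpr ⟨algebraMap R _ u, algebraMap R _ v, ?_⟩
    rw [← map_pow, ← map_pow, ← map_pow, ← map_mul, ← map_mul, ← map_add, huv]
  have htop := Ideal.eq_top_of_isUnit_mem _ hmem
    (((IsLocalization.Away.algebraMap_isUnit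
      (S := Localization.Away h) h)).pow e)
  obtain ⟨p, q, hpq⟩ := Ideal.mem_span_pair.mp
    ((Ideal.eq_top_iff_one _).mp htop)
  exact ⟨p, q, hpq⟩

/-- If `φ : R[1/h] → R[1/f]` kills `z`, then `f^n z = 0` for some `n`. -/
lemma aux_vanish (f h : R) (φ : Localization.Away h →ₐ[R] Localization.Away f)
    (z : Localization.Away h) (hz : φ z = 0) :
    ∃ n : ℕ, algebraMap R (Localization.Away h) f ^ n * z = 0 := by
  obtain ⟨m, r, hr⟩ := IsLocalization.Away.surj (S := Localization.Away h) h z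
  have h1 : algebraMap R (Localization.Away f) r = algebraMap R (Localization.Away f) 0 := by
    have := congrArg φ hr
    rw [map_mul, map_pow, φ.commutes, φ.commutes, hz, zero_mul] at this
    rw [map_zero, ← this]
  obtain ⟨n, hn⟩ := IsLocalization.Away.exists_of_eq (S := Localization.Away f) (x := f) h1
  rw [mul_zero] at hn
  refine ⟨n, ?_⟩
  have hu : IsUnit ((algebraMap R (Localization.Away h) h) ^ m) :=
    (IsLocalization.Away.algebraMap_isUnit (S := Localization.Away h) h).pow m
  apply hu.mul_left_injective
  show _ * _ = (0 : Localization.Away h) * _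
  rw [zero_mul, mul_assoc, hr, ← map_pow, ← map_mul, hn, map_zero]

/-- Existence part of the sheaf condition. -/
lemma aux_exists (f g h : R)
    (hc : h ∈ (Ideal.span {f, g} : Ideal R).radical)
    (φf : Localization.Away h →ₐ[R] Localization.Away f)
    (φg : Localization.Away h →ₐ[R] Localization.Away g)
    (ψf : Localization.Away f →ₐ[R] Localization.Away (f * g))
    (ψg : Localization.Away g →ₐ[R] Localization.Away (f * g))
    (x : Localization.Away f) (y : Localization.Away g) (hxy : ψf x = ψg y) :
    ∃ z, φf z = x ∧ φg z = y := by
  obtain ⟨n1, a0, ha0⟩ := IsLocalization.Away.surj (S := Localization.Away f) f x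
  obtain ⟨n2, b0, hb0⟩ := IsLocalization.Away.surj (S := Localization.Away g) g y
  have e1 : algebraMap R (Localization.Away (f * g)) (a0 * f ^ n2 * g ^ (n1 + n2))
      = algebraMap R (Localization.Away (f * g)) (b0 * g ^ n1 * f ^ (n1 + n2)) := by
    have hfx := congrArg ψf ha0
    have hgy := congrArg ψg hb0
    simp only [map_mul, map_pow, AlgHom.commutes] at hfx hgy
    simp only [map_mul, map_pow]
    linear_combination
      (-((algebraMap R (Localization.Away (f * g)) f) ^ n2
          * (algebraMap R (Localization.Away (f * g)) g) ^ (n1 + n2))) * hfx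
      + ((algebraMap R (Localization.Away (f * g)) g) ^ n1
          * (algebraMap R (Localization.Away (f * g)) f) ^ (n1 + n2)) * hgy
      + ((algebraMap R (Localization.Away (f * g)) f) ^ (n1 + n2)
          * (algebraMap R (Localization.Away (f * g)) g) ^ (n1 + n2)) * hxy
  obtain ⟨m, hm⟩ := IsLocalization.Away.exists_of_eq
    (S := Localization.Away (f * g)) (x := f * g) e1
  -- notation: N = n1 + n2 + m, A = a0 * f ^ (n2 + m), B = b0 * g ^ (n1 + m)
  have hAB : (a0 * f ^ (n2 + m)) * g ^ (n1 + n2 + m)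
      = (b0 * g ^ (n1 + m)) * f ^ (n1 + n2 + m) := by linear_combination hm
  have hxA : x * algebraMap R (Localization.Away f) f ^ (n1 + n2 + m)
      = algebraMap R (Localization.Away f) a0
          * algebraMap R (Localization.Away f) f ^ (n2 + m) := by
    linear_combination (algebraMap R (Localization.Away f) f) ^ (n2 + m) * ha0
  have hyB : y * algebraMap R (Localization.Away g) g ^ (n1 + n2 + m)
      = algebraMap R (Localization.Away g) b0
          * algebraMap R (Localization.Away g) g ^ (n1 + m) := by
    linear_combination (algebraMap R (Localization.Away g) g) ^ (n1 + m) * hb0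
  have huf : IsUnit ((algebraMap R (Localization.Away f) f) ^ (n1 + n2 + m)) :=
    (IsLocalization.Away.algebraMap_isUnit (S := Localization.Away f) f).pow _
  have hug : IsUnit ((algebraMap R (Localization.Away g) g) ^ (n1 + n2 + m)) :=
    (IsLocalization.Away.algebraMap_isUnit (S := Localization.Away g) g).pow _
  have hB' : algebraMap R (Localization.Away f) b0
      * algebraMap R (Localization.Away f) g ^ (n1 + m)
      = x * algebraMap R (Localization.Away f) g ^ (n1 + n2 + m) := by
    have h3 := congrArg (algebraMap R (Localization.Away f)) hAB
    simp only [map_mul, map_pow] at h3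
    apply huf.mul_left_injective
    show _ * _ = _ * _
    linear_combination (-1 : Localization.Away f) * h3
      - (algebraMap R (Localization.Away f) g) ^ (n1 + n2 + m) * hxA
  have hA' : algebraMap R (Localization.Away g) a0
      * algebraMap R (Localization.Away g) f ^ (n2 + m)
      = y * algebraMap R (Localization.Away g) f ^ (n1 + n2 + m) := by
    have h4 := congrArg (algebraMap R (Localization.Away g)) hAB
    simp only [map_mul, map_pow] at h4
    apply hug.mul_left_injective
    show _ * _ = _ * _
    linear_combination h4 - (algebraMap R (Localization.Away g) f) ^ (n1 + n2 + m) * hyB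
  obtain ⟨p, q, hpq⟩ := aux_one_eq_comb f g h hc (n1 + n2 + m) (n1 + n2 + m)
  refine ⟨p * algebraMap R (Localization.Away h) (a0 * f ^ (n2 + m))
    + q * algebraMap R (Localization.Away h) (b0 * g ^ (n1 + m)), ?_, ?_⟩
  · have key1 := congrArg φf hpq
    simp only [map_add, map_mul, map_pow, AlgHom.commutes, map_one] at key1
    simp only [map_add, map_mul, map_pow, AlgHom.commutes]
    linear_combination (-(φf p)) * hxA + φf q * hB' + x * key1
  · have key2 := congrArg φg hpq
    simp only [map_add, map_mul, map_pow, AlgHom.commutes, map_one] at key2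
    simp only [map_add, map_mul, map_pow, AlgHom.commutes]
    linear_combination φg p * hA' - φg q * hyB + y * key2

end Aux

theorem away_square_isPullback {R : Type u} [CommRing R] (f g h : R)
    (hcover : (Ideal.span {h} : Ideal R).radical =
      (Ideal.span {f, g} : Ideal R).radical)
    (φf : Localization.Away h →ₐ[R] Localization.Away f)
    (φg : Localization.Away h →ₐ[R] Localization.Away g)
    (ψf : Localization.Away f →ₐ[R] Localization.Away (f * g))
    (ψg : Localization.Away g →ₐ[R] Localization.Away (f * g)) :
    CategoryTheory.IsPullback
      (CommRingCat.ofHom φf.toRingHom) (CommRingCat.ofHom φg.toRingHom)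
      (CommRingCat.ofHom ψf.toRingHom) (CommRingCat.ofHom ψg.toRingHom) := by
  have hc : h ∈ (Ideal.span {f, g} : Ideal R).radical := by
    rw [← hcover]
    exact Ideal.le_radical (Ideal.subset_span rfl)
  have jinj : ∀ z w : Localization.Away h, φf z = φf w → φg z = φg w → z = w := by
    intro z w h1 h2
    obtain ⟨n, hn⟩ := aux_vanish f h φf (z - w) (by rw [map_sub, h1, sub_self])
    obtain ⟨m, hm⟩ := aux_vanish g h φg (z - w) (by rw [map_sub, h2, sub_self])
    obtain ⟨p, q, hpq⟩ := aux_one_eq_comb f g h hc n m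
    have hz : z - w = 0 := by
      calc z - w = 1 * (z - w) := (one_mul _).symm
        _ = (p * algebraMap R (Localization.Away h) f ^ n
              + q * algebraMap R (Localization.Away h) g ^ m) * (z - w) := by rw [hpq]
        _ = p * (algebraMap R (Localization.Away h) f ^ n * (z - w))
              + q * (algebraMap R (Localization.Away h) g ^ m * (z - w)) := by ring
        _ = 0 := by rw [hn, hm, mul_zero, mul_zero, add_zero]
    exact sub_eq_zero.mp hz
  have comm : CommRingCat.ofHom φf.toRingHom ≫ CommRingCat.ofHom ψf.toRingHom
      = CommRingCat.ofHom φg.toRingHom ≫ CommRingCat.ofHom ψg.toRingHom := by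
    apply CommRingCat.hom_ext
    show (ψf.toRingHom.comp φf.toRingHom : _ →+* _) = ψg.toRingHom.comp φg.toRingHom
    apply IsLocalization.ringHom_ext (Submonoid.powers h)
    ext r
    simp [AlgHom.commutes]
  have hfst : ∀ s : PullbackCone (CommRingCat.ofHom ψf.toRingHom)
      (CommRingCat.ofHom ψg.toRingHom),
      ∀ t : s.pt, ψf (s.fst t) = ψg (s.snd t) := fun s t => RingHom.congr_fun (congrArg CommRingCat.Hom.hom s.condition) t
  choose lft hl1 hl2 using fun s => fun t : (_ : PullbackCone (CommRingCat.ofHom ψf.toRingHom)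
      (CommRingCat.ofHom ψg.toRingHom)).pt =>
    aux_exists f g h hc φf φg ψf ψg (s.fst t) (s.snd t) (hfst s t)
  let L : ∀ s : PullbackCone (CommRingCat.ofHom ψf.toRingHom) (CommRingCat.ofHom ψg.toRingHom),
      (s.pt : Type u) →+* Localization.Away h := fun s =>
    { toFun := lft s
      map_one' := jinj _ _ (by simp [hl1]) (by simp [hl2])
      map_mul' := fun t t' => jinj _ _ (by simp [hl1]) (by simp [hl2])
      map_zero' := jinj _ _ (by simp [hl1]) (by simp [hl2])
      map_add' := fun t t' => jinj _ _ (by simp [hl1]) (by simp [hl2]) }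
  refine CategoryTheory.IsPullback.of_isLimit' ⟨comm⟩
    (PullbackCone.IsLimit.mk _ (fun s => CommRingCat.ofHom (L s))
      (fun s => CommRingCat.hom_ext <| RingHom.ext fun t => hl1 s t)
      (fun s => CommRingCat.hom_ext <| RingHom.ext fun t => hl2 s t)
      (fun s m hm1 hm2 => CommRingCat.hom_ext <| RingHom.ext fun t =>
        jinj _ _ ((RingHom.congr_fun (congrArg CommRingCat.Hom.hom hm1) t).trans (hl1 s t).symm)
          ((RingHom.congr_fun (congrArg CommRingCat.Hom.hom hm2) t).trans (hl2 s t).symm)))
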